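/- Let L ⊆ ∏_{i=1}^t L_i be a subdirect product of finite lattices with projections π_i and smallest-preimage maps σ_i. Then every join-irreducible element of L lies in ⋃_{i=1}^t σ_i(J(L_i)), where J(L_i) is the set of join-irreducible elements of L_i; that is, J(L) ⊆ ⋃_i σ_i(J(L_i)). -/
import Mathlib

lemma supIrred_sup'_aux {ι α : Type*} [SemilatticeSup α] {s : Finset ι} (hs : s.Nonempty)
    (f : ι → α) {a : α} (ha : SupIrred a) (h : s.sup' hs f = a) : ∃ i ∈ s, f i = a := by
  induction hs using Finset.Nonempty.cons_induction with
  | singleton i => exact ⟨i, Finset.mem_singleton_self i, by simpa using h⟩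
  | cons i s hi hne ih =>
      rw [Finset.sup'_cons hne] at h
      rcases ha.2 h with h' | h'
      · exact ⟨i, Finset.mem_cons_self i s, h'⟩
      · obtain ⟨j, hj, hj'⟩ := ih h'
        exact ⟨j, Finset.mem_cons_of_mem hj, hj'⟩

/-- In a subdirect product `L ⊆ ∏ᵢ Lᵢ` of finite lattices, every
join-irreducible element of `L` lies in `⋃ᵢ σᵢ(J(Lᵢ))`. -/
theorem stmt_3 {t : ℕ} {Lf : Fin t → Type*} [∀ i, Lattice (Lf i)] [∀ i, Finite (Lf i)]
    (L : Sublattice (∀ i, Lf i))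
    (hsurj : ∀ i, Function.Surjective fun x : L => x.val i)
    (σ : ∀ j, Lf j → L)
    (hσ : ∀ j (y : Lf j), IsLeast {x : L | x.val j = y} (σ j y)) :
    ∀ p : L, SupIrred p → ∃ i, ∃ q : Lf i, SupIrred q ∧ σ i q = p := by
  intro p hp
  -- t ≠ 0
  rcases Nat.eq_zero_or_pos t with ht | ht
  · exfalso
    apply hp.1
    intro x _
    have : x.val = p.val := by funext j; exact (j.cast ht).elim0
    exact le_of_eq (Subtype.ext this).symm
  have hne : (Finset.univ : Finset (Fin t)).Nonempty := by
    simpa [Finset.univ_nonempty_iff] using Fin.pos_iff_nonempty.mp ht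
  -- p = sup of σ i (p.val i)
  have hdecomp : (Finset.univ.sup' hne fun i => σ i (p.val i)) = p := by
    apply le_antisymm
    · exact Finset.sup'_le _ _ fun i _ => (hσ i (p.val i)).2 (by simp [Set.mem_setOf_eq])
    · intro j
      have h1 : σ j (p.val j) ≤ Finset.univ.sup' hne fun i => σ i (p.val i) :=
        Finset.le_sup' (f := fun i => σ i (p.val i)) (Finset.mem_univ j)
      have h2 : (σ j (p.val j)).val j = p.val j := (hσ j (p.val j)).1
      calc p.val j = (σ j (p.val j)).val j := h2.symm
        _ ≤ _ := h1 j
  obtain ⟨i, -, hi⟩ := supIrred_sup'_aux hne _ hp hdecomp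
  refine ⟨i, p.val i, ⟨?_, ?_⟩, hi⟩
  · -- ¬ IsMin (p.val i)
    intro hmin
    apply hp.1
    intro x hx
    have hxi : x.val i = p.val i := le_antisymm (hx i) (hmin (hx i))
    calc p = σ i (p.val i) := hi.symm
      _ ≤ x := (hσ i (p.val i)).2 hxi
  · -- sup condition
    intro a b hab
    have key : ∀ c : Lf i, c ≤ p.val i → σ i c ≤ p := by
      intro c hc
      have hmem : (σ i c ⊓ p).val i = c := by
        have : (σ i c).val i = c := (hσ i c).1
        show (σ i c).val i ⊓ p.val i = c
        rw [this, inf_eq_left.mpr hc]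
      exact le_trans ((hσ i c).2 hmem) inf_le_right
    have hsup : σ i a ⊔ σ i b = p := by
      apply le_antisymm
      · exact sup_le (key a (hab ▸ le_sup_left)) (key b (hab ▸ le_sup_right))
      · have hmem : (σ i a ⊔ σ i b).val i = p.val i := by
          show (σ i a).val i ⊔ (σ i b).val i = p.val i
          rw [(hσ i a).1, (hσ i b).1, hab]
        calc p = σ i (p.val i) := hi.symm
          _ ≤ _ := (hσ i (p.val i)).2 hmem
    rcases hp.2 hsup with h | h
    · left; rw [← (hσ i a).1, h]
    · right; rw [← (hσ i b).1, h]
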